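/- arXiv:2007.09166 — 4 statements merged into one kernel-verified Lean document; each statement's English description precedes it below -/
import Mathlib

section
/- (A priori bound, Lemma 3.1.) Let f : Vᵐ → V be continuous and satisfy condition (A3) with constant R > 0. If x : ℝ → V is a twice continuously differentiable 2π-periodic function with sup_{t∈ℝ} |x(t)| > R, then for every λ ∈ [0,1], x is not a solution of the equation ẍ(t) = λ(f(x_t) − x(t)) + x(t); that is, there exists t ∈ ℝ such that ẍ(t) ≠ λ(f(x_t) − x(t)) + x(t). -/
open Real Function RealInnerProductSpace

/-- A priori bound, Lemma 3.1: if `f` satisfies (A3) with constant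
`R > 0` and `x` is a `C²` `2π`-periodic function whose sup-norm exceeds `R`, then
for every `λ ∈ [0,1]`, `x` does not solve `ẍ(t) = λ(f(x_t) − x(t)) + x(t)`. -/
theorem stmt1 (n m : ℕ) (hn : 0 < n) (hm : 0 < m) [NeZero m]
    (f : (Fin m → EuclideanSpace ℝ (Fin n)) → EuclideanSpace ℝ (Fin n))
    (hf : Continuous f) (R : ℝ) (hR : 0 < R)
    (hA3 : ∀ v : Fin m → EuclideanSpace ℝ (Fin n),
      R < ‖v 0‖ → (∀ j : Fin m, ‖v j‖ ≤ ‖v 0‖) → 0 < ⟪v 0, f v⟫)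
    (x : ℝ → EuclideanSpace ℝ (Fin n)) (hx : ContDiff ℝ 2 x)
    (hper : Periodic x (2 * π)) (hsup : ∃ t₀ : ℝ, R < ‖x t₀‖)
    (lam : ℝ) (hlam : lam ∈ Set.Icc (0 : ℝ) 1) :
    ∃ t : ℝ, deriv (deriv x) t ≠
      lam • (f (fun j : Fin m => x (t - j.1 * (2 * π / m))) - x t) + x t := by
  by_contra hcon
  push_neg at hcon
  have hπ : (0 : ℝ) < 2 * π := by positivity
  -- differentiability data
  have hx2 : ContDiff ℝ ((1 : WithTop ℕ∞) + 1) x := by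
    exact hx
  have hd0 : Differentiable ℝ x := (contDiff_succ_iff_deriv.mp hx2).1
  have hcd1 : ContDiff ℝ 1 (deriv x) := (contDiff_succ_iff_deriv.mp hx2).2.2
  have hd1 : Differentiable ℝ (deriv x) := hcd1.differentiable one_ne_zero
  have hxc : Continuous x := hd0.continuous
  have hx'c : Continuous (deriv x) := hcd1.continuous
  -- x'' is continuous via the equation
  have hx''c : Continuous (deriv (deriv x)) := by
    rw [show deriv (deriv x) = fun t =>
      lam • (f (fun j : Fin m => x (t - j.1 * (2 * π / m))) - x t) + x t from funext hcon]
    apply Continuous.add _ hxc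
    refine Continuous.const_smul (g := fun t : ℝ => f (fun j : Fin m => x (t - j.1 * (2 * π / m))) - x t) ?_ lam
    apply Continuous.sub _ hxc
    exact hf.comp (continuous_pi fun j => hxc.comp (by continuity))
  -- the squared norm function
  set g : ℝ → ℝ := fun t => ⟪x t, x t⟫ with hg
  have hgc : Continuous g := hxc.inner hxc
  have hgper : Periodic g (2 * π) := fun t => by simp only [hg, hper t]
  -- maximum on a period
  obtain ⟨T, -, hTmax⟩ := isCompact_Icc.exists_isMaxOn (s := Set.Icc 0 (2 * π))
    ⟨0, by constructor <;> [rfl; positivity]⟩ hgc.continuousOn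
  have hmax : ∀ t, g t ≤ g T := by
    intro t
    obtain ⟨y, hy, hy2⟩ := hgper.exists_mem_Ico₀ hπ t
    rw [hy2]
    exact hTmax (Set.Ico_subset_Icc_self hy)
  have hnorm : ∀ t, ‖x t‖ ≤ ‖x T‖ := by
    intro t
    have h1 := hmax t
    simp only [hg, real_inner_self_eq_norm_sq] at h1
    nlinarith [norm_nonneg (x t), norm_nonneg (x T)]
  obtain ⟨t₀, ht₀⟩ := hsup
  have hRT : R < ‖x T‖ := lt_of_lt_of_le ht₀ (hnorm t₀)
  -- apply (A3)
  set v : Fin m → EuclideanSpace ℝ (Fin n) := fun j => x (T - j.1 * (2 * π / m)) with hv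
  have hv0 : v 0 = x T := by simp [hv]
  have hA : 0 < ⟪x T, f v⟫ := by
    have := hA3 v (by rw [hv0]; exact hRT) (fun j => by rw [hv0]; exact hnorm _)
    rwa [hv0] at this
  -- inner product with x'' at T is positive
  have hBpos : (0 : ℝ) < ⟪x T, x T⟫ := by
    rw [real_inner_self_eq_norm_sq]
    nlinarith
  have hxx'' : 0 < ⟪x T, deriv (deriv x) T⟫ := by
    rw [hcon T]
    rw [inner_add_right, real_inner_smul_right, inner_sub_right]
    rcases le_total (⟪x T, f v⟫) (⟪x T, x T⟫) with h | h
    · nlinarith [hlam.1, hlam.2]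
    · nlinarith [hlam.1, hlam.2]
  -- derivative facts
  have hG : ∀ t, HasDerivAt g (⟪x t, deriv x t⟫ + ⟪deriv x t, x t⟫) t := fun t =>
    HasDerivAt.inner ℝ (hd0 t).hasDerivAt (hd0 t).hasDerivAt
  set G : ℝ → ℝ := fun t => ⟪x t, deriv x t⟫ + ⟪deriv x t, x t⟫ with hGdef
  have hderivg : ∀ t, deriv g t = G t := fun t => (hG t).deriv
  set c : ℝ → ℝ := fun t => (⟪x t, deriv (deriv x) t⟫ + ⟪deriv x t, deriv x t⟫)
      + (⟪deriv x t, deriv x t⟫ + ⟪deriv (deriv x) t, x t⟫) with hcdef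
  have hG' : ∀ t, HasDerivAt G (c t) t := fun t =>
    (HasDerivAt.inner ℝ (hd0 t).hasDerivAt (hd1 t).hasDerivAt).add
      (HasDerivAt.inner ℝ (hd1 t).hasDerivAt (hd0 t).hasDerivAt)
  have hGc : Continuous G := (hxc.inner hx'c).add (hx'c.inner hxc)
  have hcc : Continuous c := ((hxc.inner hx''c).add (hx'c.inner hx'c)).add
    ((hx'c.inner hx'c).add (hx''c.inner hxc))
  -- G T = 0 since T is a global max of g
  have hGT : G T = 0 := by
    rw [← hderivg T]
    exact IsLocalMax.deriv_eq_zero (Filter.Eventually.of_forall hmax)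
  -- c T > 0
  have hcT : 0 < c T := by
    have h1 : (0:ℝ) ≤ ⟪deriv x T, deriv x T⟫ := real_inner_self_nonneg
    have h2 : ⟪deriv (deriv x) T, x T⟫ = ⟪x T, deriv (deriv x) T⟫ := real_inner_comm _ _
    simp only [hcdef]
    rw [h2]
    linarith
  -- c > 0 on a small interval to the right of T
  obtain ⟨ε, hε, hball⟩ := Metric.isOpen_iff.mp (isOpen_lt continuous_const hcc) T hcT
  set δ : ℝ := ε / 2 with hδ
  have hδpos : 0 < δ := by positivity
  have hcpos : ∀ t ∈ Set.Icc T (T + δ), 0 < c t := by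
    intro t ht
    apply hball
    rw [Metric.mem_ball, Real.dist_eq, abs_sub_lt_iff]
    constructor <;> [linarith [ht.1, ht.2]; linarith [ht.1, ht.2]]
  -- G is strictly monotone on [T, T+δ], hence positive on (T, T+δ)
  have hGmono : StrictMonoOn G (Set.Icc T (T + δ)) := by
    apply strictMonoOn_of_deriv_pos (convex_Icc _ _) hGc.continuousOn
    intro t ht
    rw [interior_Icc] at ht
    rw [(hG' t).deriv]
    exact hcpos t ⟨ht.1.le, ht.2.le⟩
  have hGpos : ∀ t ∈ Set.Ioo T (T + δ), 0 < G t := by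
    intro t ht
    have := hGmono (Set.left_mem_Icc.mpr (by linarith)) ⟨ht.1.le, ht.2.le⟩ ht.1
    rwa [hGT] at this
  -- hence g is strictly monotone on [T, T+δ], contradicting maximality
  have hgmono : StrictMonoOn g (Set.Icc T (T + δ)) := by
    apply strictMonoOn_of_deriv_pos (convex_Icc _ _) hgc.continuousOn
    intro t ht
    rw [interior_Icc] at ht
    rw [hderivg t]
    exact hGpos t ht
  have : g T < g (T + δ) :=
    hgmono (Set.left_mem_Icc.mpr (by linarith)) (Set.right_mem_Icc.mpr (by linarith))
      (by linarith)
  linarith [hmax (T + δ)]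
end

section
/- (Uniform a priori bounds, Lemma 3.2.) Let f : Vᵐ → V be continuous and satisfy condition (A3). Then there exists a constant M > 0 such that for every λ ∈ [0,1] and every twice continuously differentiable 2π-periodic solution x : ℝ → V of ẍ(t) = λ(f(x_t) − x(t)) + x(t), one has |x(t)| < M, |ẋ(t)| < M, and |ẍ(t)| < M for all t ∈ ℝ. -/
open Real Function RealInnerProductSpace

private lemma secondDerivTest (h φ : ℝ → ℝ) (t₀ : ℝ) (hmax : ∀ t, h t ≤ h t₀)
    (hd : ∀ t, HasDerivAt h (φ t) t) {a : ℝ} (hφd : HasDerivAt φ a t₀) : a ≤ 0 := by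
  by_contra ha
  push_neg at ha
  have hφ0 : φ t₀ = 0 :=
    IsLocalMax.hasDerivAt_eq_zero (Filter.Eventually.of_forall hmax) (hd t₀)
  have hslope := (hasDerivAt_iff_tendsto_slope.1 hφd).eventually (eventually_gt_nhds ha)
  have h2 : ∀ᶠ t in nhdsWithin t₀ (Set.Ioi t₀), 0 < φ t := by
    filter_upwards [nhdsWithin_mono t₀ (fun t ht => ne_of_gt ht) hslope,
      self_mem_nhdsWithin] with t h1 (h2 : t₀ < t)
    have h1' : 0 < (φ t - φ t₀) / (t - t₀) := by rw [slope_def_field] at h1; exact h1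
    rw [hφ0, sub_zero] at h1'
    have := mul_pos h1' (sub_pos.2 h2)
    rwa [div_mul_cancel₀] at this
    exact ne_of_gt (sub_pos.2 h2)
  obtain ⟨u, hu, hsub⟩ := mem_nhdsGT_iff_exists_Ioo_subset.1 h2
  have hu' : t₀ < u := hu
  have hmono : StrictMonoOn h (Set.Icc t₀ u) := by
    apply strictMonoOn_of_deriv_pos (convex_Icc _ _)
    · exact fun t _ => (hd t).differentiableAt.continuousAt.continuousWithinAt
    · intro t ht
      rw [interior_Icc] at ht
      rw [(hd t).deriv]
      exact hsub ht
  have h1 : h t₀ < h ((t₀ + u) / 2) :=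
    hmono (Set.left_mem_Icc.2 hu'.le) ⟨by linarith, by linarith⟩ (by linarith)
  exact absurd (hmax _) (not_le.2 h1)

/-- Uniform a priori bounds, Lemma 3.2: if `f` is continuous and
satisfies (A3), then there is `M > 0` bounding (strictly) `x`, `ẋ`, `ẍ` uniformly
for every `λ ∈ [0,1]` and every `C²` `2π`-periodic solution of
`ẍ(t) = λ(f(x_t) − x(t)) + x(t)`. -/
theorem stmt2 (n m : ℕ) (hn : 0 < n) (hm : 0 < m) [NeZero m]
    (f : (Fin m → EuclideanSpace ℝ (Fin n)) → EuclideanSpace ℝ (Fin n))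
    (hf : Continuous f)
    (hA3 : ∃ R > (0 : ℝ), ∀ v : Fin m → EuclideanSpace ℝ (Fin n),
      R < ‖v 0‖ → (∀ j : Fin m, ‖v j‖ ≤ ‖v 0‖) → 0 < ⟪v 0, f v⟫) :
    ∃ M > (0 : ℝ), ∀ lam ∈ Set.Icc (0 : ℝ) 1,
      ∀ x : ℝ → EuclideanSpace ℝ (Fin n), ContDiff ℝ 2 x → Periodic x (2 * π) →
        (∀ t : ℝ, deriv (deriv x) t =
          lam • (f (fun j : Fin m => x (t - j.1 * (2 * π / m))) - x t) + x t) →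
        ∀ t : ℝ, ‖x t‖ < M ∧ ‖deriv x t‖ < M ∧ ‖deriv (deriv x) t‖ < M := by
  obtain ⟨R, hR, hA3⟩ := hA3
  -- a bound for f on the ball of radius R
  have hKc : IsCompact {v : Fin m → EuclideanSpace ℝ (Fin n) | ∀ j, ‖v j‖ ≤ R} := by
    have : {v : Fin m → EuclideanSpace ℝ (Fin n) | ∀ j, ‖v j‖ ≤ R}
        = Set.pi Set.univ (fun _ : Fin m => Metric.closedBall (0 : EuclideanSpace ℝ (Fin n)) R) := by
      ext v
      simp [Set.mem_pi, Metric.mem_closedBall, dist_zero_right]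
    rw [this]
    exact isCompact_univ_pi fun _ => isCompact_closedBall _ _
  obtain ⟨C₀, hC₀⟩ : ∃ C₀ : ℝ, ∀ v ∈ {v : Fin m → EuclideanSpace ℝ (Fin n) | ∀ j, ‖v j‖ ≤ R}, ‖f v‖ ≤ C₀ :=
    (hKc.image hf).isBounded.exists_norm_le.imp fun C₀ h v hv => h _ (Set.mem_image_of_mem f hv)
  set C : ℝ := max C₀ 0 with hCdef
  have hC : ∀ v : Fin m → EuclideanSpace ℝ (Fin n), (∀ j, ‖v j‖ ≤ R) → ‖f v‖ ≤ C :=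
    fun v hv => (hC₀ v hv).trans (le_max_left _ _)
  have hC0 : 0 ≤ C := le_max_right _ _
  set B : ℝ := C + 2 * R with hBdef
  have hB0 : 0 < B := by positivity
  refine ⟨R + 2 * π * B + B + 1, by positivity, ?_⟩
  intro lam hlam x hx hper heq
  -- regularity facts
  rw [show (2 : WithTop ℕ∞) = 1 + 1 by norm_num] at hx
  have hdx : Differentiable ℝ x := hx.differentiable (by norm_num)
  have hxc : Continuous x := hx.continuous
  have hcd1 : ContDiff ℝ 1 (deriv x) := (contDiff_succ_iff_deriv.mp hx).2.2
  have hdx2 : Differentiable ℝ (deriv x) := hcd1.differentiable one_ne_zero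
  have hcdx : Continuous (deriv x) := hcd1.continuous
  have hcddx : Continuous (deriv (deriv x)) := hcd1.continuous_deriv le_rfl
  -- the maximum of ‖x‖
  have hpn : Periodic (fun t => ‖x t‖) (2 * π) := fun t => by simp [hper t]
  obtain ⟨t₀, -, ht₀⟩ := (isCompact_Icc (a := (0:ℝ)) (b := 2 * π)).exists_isMaxOn
    ⟨0, Set.left_mem_Icc.2 (by positivity)⟩ (hxc.norm.continuousOn)
  have hmax : ∀ t, ‖x t‖ ≤ ‖x t₀‖ := by
    intro t
    obtain ⟨s, hs, hst⟩ := hpn.exists_mem_Ico₀ (by positivity) t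
    calc ‖x t‖ = ‖x s‖ := hst
      _ ≤ ‖x t₀‖ := ht₀ ⟨hs.1, hs.2.le⟩
  -- a priori bound on x
  have hbR : ‖x t₀‖ ≤ R := by
    by_contra hlt
    push_neg at hlt
    set v : Fin m → EuclideanSpace ℝ (Fin n) := fun j => x (t₀ - j.1 * (2 * π / m)) with hvdef
    have hv0 : v 0 = x t₀ := by simp [hvdef]
    have hvle : ∀ j, ‖v j‖ ≤ ‖v 0‖ := fun j => by rw [hv0]; exact hmax _
    have hpos : 0 < ⟪v 0, f v⟫ := hA3 v (by rw [hv0]; exact hlt) hvle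
    rw [hv0] at hpos
    set h : ℝ → ℝ := fun t => ⟪x t₀, x t⟫ with hhdef
    have hh : ∀ t, h t ≤ h t₀ := by
      intro t
      calc h t ≤ ‖x t₀‖ * ‖x t‖ := real_inner_le_norm _ _
        _ ≤ ‖x t₀‖ * ‖x t₀‖ := mul_le_mul_of_nonneg_left (hmax t) (norm_nonneg _)
        _ = h t₀ := (real_inner_self_eq_norm_mul_norm _).symm
    have hd1 : ∀ t, HasDerivAt h (⟪x t₀, deriv x t⟫) t := fun t => by
      simpa using (hasDerivAt_const t (x t₀)).inner ℝ (hdx t).hasDerivAt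
    have hd2 : HasDerivAt (fun t => ⟪x t₀, deriv x t⟫) (⟪x t₀, deriv (deriv x) t₀⟫) t₀ := by
      simpa using (hasDerivAt_const t₀ (x t₀)).inner ℝ (hdx2 t₀).hasDerivAt
    have hle := secondDerivTest h _ t₀ hh hd1 hd2
    rw [heq t₀] at hle
    have hexp : ⟪x t₀, lam • (f v - x t₀) + x t₀⟫
        = lam * ⟪x t₀, f v⟫ + (1 - lam) * (‖x t₀‖ * ‖x t₀‖) := by
      rw [inner_add_right, real_inner_smul_right, inner_sub_right,
        real_inner_self_eq_norm_mul_norm]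
      ring
    rw [hexp] at hle
    have hsq : 0 < ‖x t₀‖ * ‖x t₀‖ := mul_pos (hR.trans hlt) (hR.trans hlt)
    obtain ⟨hl0, hl1⟩ := hlam
    rcases eq_or_lt_of_le hl0 with hl | hl
    · rw [← hl] at hle; nlinarith
    · nlinarith [mul_pos hl hpos, mul_nonneg (sub_nonneg.2 hl1) hsq.le]
  have hxR : ∀ t, ‖x t‖ ≤ R := fun t => (hmax t).trans hbR
  -- bound on the second derivative
  have hddxB : ∀ t, ‖deriv (deriv x) t‖ ≤ B := by
    intro t
    rw [heq t]
    obtain ⟨hl0, hl1⟩ := hlam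
    have hfv : ‖f (fun j : Fin m => x (t - j.1 * (2 * π / m)))‖ ≤ C :=
      hC _ fun j => hxR _
    calc ‖lam • (f (fun j : Fin m => x (t - j.1 * (2 * π / m))) - x t) + x t‖
        ≤ ‖lam • (f (fun j : Fin m => x (t - j.1 * (2 * π / m))) - x t)‖ + ‖x t‖ :=
          norm_add_le _ _
      _ ≤ lam * (‖f (fun j : Fin m => x (t - j.1 * (2 * π / m)))‖ + ‖x t‖) + ‖x t‖ := by
          rw [norm_smul, Real.norm_eq_abs, abs_of_nonneg hl0]
          gcongr
          exact norm_sub_le _ _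
      _ ≤ 1 * (C + R) + R := by
          have := hxR t
          nlinarith [norm_nonneg (f (fun j : Fin m => x (t - j.1 * (2 * π / m)))), hxR t]
      _ = B := by rw [hBdef]; ring
  -- bound on the first derivative
  have hdxB : ∀ t, ‖deriv x t‖ ≤ 2 * π * B := by
    intro t
    have hπ : (0:ℝ) < 2 * π := by positivity
    have hint0 : (∫ s in t..(t + 2 * π), deriv x s) = x (t + 2 * π) - x t :=
      intervalIntegral.integral_deriv_eq_sub (fun s _ => hdx s)
        (hcdx.intervalIntegrable _ _)
    have hdiff : ∀ s, deriv x s - deriv x t = ∫ u in t..s, deriv (deriv x) u := by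
      intro s
      rw [intervalIntegral.integral_deriv_eq_sub (fun u _ => hdx2 u)
        (hcddx.intervalIntegrable _ _)]
    have key : (2 * π) • deriv x t = ∫ s in t..(t + 2 * π), (deriv x t - deriv x s) := by
      rw [intervalIntegral.integral_sub (intervalIntegrable_const)
        (hcdx.intervalIntegrable _ _), hint0, hper t, sub_self, sub_zero,
        intervalIntegral.integral_const]
      congr 1
      ring
    have hbnd : ‖(2 * π) • deriv x t‖ ≤ 2 * π * B * |t + 2 * π - t| := by
      rw [key]
      apply intervalIntegral.norm_integral_le_of_norm_le_const
      intro s hs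
      rw [Set.uIoc_of_le (by linarith : t ≤ t + 2 * π)] at hs
      have h1 : ‖deriv x t - deriv x s‖ = ‖∫ u in t..s, deriv (deriv x) u‖ := by
        rw [← norm_neg, neg_sub, hdiff s]
      rw [h1]
      calc ‖∫ u in t..s, deriv (deriv x) u‖ ≤ B * |s - t| :=
            intervalIntegral.norm_integral_le_of_norm_le_const fun u _ => hddxB u
        _ ≤ B * (2 * π) := by
            apply mul_le_mul_of_nonneg_left _ hB0.le
            rw [abs_of_nonneg (by linarith [hs.1.le] : (0:ℝ) ≤ s - t)]
            linarith [hs.2]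
        _ = 2 * π * B := by ring
    rw [norm_smul, Real.norm_eq_abs, abs_of_pos hπ] at hbnd
    have habs : |t + 2 * π - t| = 2 * π := by rw [abs_of_pos (by linarith)]; ring_nf
    rw [habs] at hbnd
    nlinarith
  intro t
  refine ⟨?_, ?_, ?_⟩
  · have := hxR t; nlinarith [mul_pos (mul_pos two_pos pi_pos) hB0]
  · have := hdxB t; nlinarith
  · have := hddxB t; nlinarith [mul_pos (mul_pos two_pos pi_pos) hB0]
end

section
/- (Local admissibility of the linearization homotopy, analytic core of Lemma 3.3.) Let E be a real Banach space, let C : E → E be a compact linear operator (C is bounded and maps bounded sets to relatively compact sets), and suppose that A := id − C is injective. Let K : E → E be a continuous map with K(0) = 0 that is Fréchet differentiable at 0 with derivative C, and set 𝓕 := id − K. Then there exists ε > 0 such that for every t ∈ [0,1] and every x ∈ E with 0 < ‖x‖ ≤ ε, one has (1−t)·A(x) + t·𝓕(x) ≠ 0. -/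
open Set

/-- If `C` is a compact operator and `id - C` is injective, then `id - C` is
bounded below. -/
lemma aux_bdd_below (E : Type*) [NormedAddCommGroup E] [NormedSpace ℝ E]
    (C : E →L[ℝ] E)
    (hcomp : ∀ s : Set E, Bornology.IsBounded s → IsCompact (closure (C '' s)))
    (hinj : Function.Injective fun x : E => x - C x) :
    ∃ c > (0 : ℝ), ∀ x : E, c * ‖x‖ ≤ ‖x - C x‖ := by
  by_contra h
  push_neg at h
  -- build a normalized sequence uₙ with ‖uₙ - C uₙ‖ small
  have hseq : ∀ n : ℕ, ∃ u : E, ‖u‖ = 1 ∧ ‖u - C u‖ < 1 / (n + 1) := by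
    intro n
    obtain ⟨x, hx⟩ := h (1 / (n + 1)) (by positivity)
    have hxne : x ≠ 0 := by
      rintro rfl
      simp at hx
    have hxnorm : (0:ℝ) < ‖x‖ := norm_pos_iff.mpr hxne
    refine ⟨‖x‖⁻¹ • x, ?_, ?_⟩
    · simp [norm_smul, abs_of_pos (inv_pos.mpr hxnorm), inv_mul_cancel₀ hxnorm.ne']
    · have : ‖x‖⁻¹ • x - C (‖x‖⁻¹ • x) = ‖x‖⁻¹ • (x - C x) := by
        simp [smul_sub]
      rw [this, norm_smul, norm_inv, norm_norm]
      rw [inv_mul_lt_iff₀ hxnorm]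
      calc ‖x - C x‖ < 1 / (n + 1) * ‖x‖ := hx
        _ = ‖x‖ * (1 / (n + 1)) := mul_comm _ _
  choose u hu1 hu2 using hseq
  -- C uₙ lies in a compact set
  have hball : Bornology.IsBounded (Metric.closedBall (0:E) 1) :=
    Metric.isBounded_closedBall
  have hK := hcomp _ hball
  have hmem : ∀ n, C (u n) ∈ closure (C '' Metric.closedBall (0:E) 1) := fun n =>
    subset_closure ⟨u n, by simp [Metric.mem_closedBall, dist_eq_norm, hu1 n], rfl⟩
  obtain ⟨y, -, φ, hφ, hconv⟩ := hK.tendsto_subseq hmem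
  -- u ∘ φ → y
  have hAto0 : Filter.Tendsto (fun n => u n - C (u n)) Filter.atTop (nhds 0) := by
    rw [tendsto_zero_iff_norm_tendsto_zero]
    apply squeeze_zero (fun n => norm_nonneg _) (fun n => (hu2 n).le)
    exact tendsto_one_div_add_atTop_nhds_zero_nat
  have hA' : Filter.Tendsto (fun n => u (φ n) - C (u (φ n))) Filter.atTop (nhds 0) :=
    hAto0.comp hφ.tendsto_atTop
  have huto : Filter.Tendsto (fun n => u (φ n)) Filter.atTop (nhds y) := by
    have := hA'.add hconv
    simpa using this
  have hy1 : ‖y‖ = 1 := by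
    have := (continuous_norm.tendsto y).comp huto
    have h2 : Filter.Tendsto (fun n => ‖u (φ n)‖) Filter.atTop (nhds 1) := by
      simpa [hu1] using Filter.tendsto_const_nhds (x := (1:ℝ)) (f := Filter.atTop (α := ℕ))
    exact tendsto_nhds_unique this h2
  have hAy : y - C y = 0 := by
    have hcont : Filter.Tendsto (fun n => u (φ n) - C (u (φ n))) Filter.atTop
        (nhds (y - C y)) := huto.sub ((C.continuous.tendsto y).comp huto)
    exact tendsto_nhds_unique hcont hA'
  have : y = 0 := hinj (a₁ := y) (a₂ := 0) (by simpa using hAy)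
  rw [this] at hy1
  simp at hy1

/-- Local admissibility of the linearization homotopy, analytic core
of Lemma 3.3: let `E` be a real Banach space, `C : E → E` a compact bounded
linear operator, `A := id − C` injective, and `K : E → E` continuous with
`K 0 = 0` and Fréchet differentiable at `0` with derivative `C`; set
`𝓕 := id − K`. Then there is `ε > 0` such that for all `t ∈ [0,1]` and all `x`
with `0 < ‖x‖ ≤ ε` one has `(1−t)·A(x) + t·𝓕(x) ≠ 0`. -/
theorem stmt7 (E : Type*) [NormedAddCommGroup E] [NormedSpace ℝ E]
    [CompleteSpace E]
    (C : E →L[ℝ] E)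
    (hcomp : ∀ s : Set E, Bornology.IsBounded s → IsCompact (closure (C '' s)))
    (hinj : Function.Injective fun x : E => x - C x)
    (K : E → E) (hKcont : Continuous K) (hK0 : K 0 = 0)
    (hKd : HasFDerivAt K C 0) :
    ∃ ε > (0 : ℝ), ∀ t ∈ Set.Icc (0 : ℝ) 1, ∀ x : E,
      0 < ‖x‖ → ‖x‖ ≤ ε → (1 - t) • (x - C x) + t • (x - K x) ≠ 0 := by
  obtain ⟨c, hc, hcb⟩ := aux_bdd_below E C hcomp hinj
  -- littleO estimate
  have hlo : (fun x => K x - C x) =o[nhds 0] fun x : E => x := by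
    have := hKd.isLittleO
    simpa [hK0] using this
  have hev : ∀ᶠ x in nhds (0:E), ‖K x - C x‖ ≤ c / 2 * ‖x‖ :=
    hlo.def (by positivity)
  rw [Metric.eventually_nhds_iff] at hev
  obtain ⟨ε, hε, hball⟩ := hev
  refine ⟨ε / 2, by positivity, fun t ht x hx hxε => ?_⟩
  have hxb : ‖K x - C x‖ ≤ c / 2 * ‖x‖ := by
    apply hball
    simp only [dist_zero_right]
    linarith
  intro heq
  have hrw : (1 - t) • (x - C x) + t • (x - K x) = (x - C x) + t • (C x - K x) := by
    module
  rw [hrw] at heq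
  have h1 : ‖x - C x‖ = ‖t • (C x - K x)‖ := by
    have : x - C x = -(t • (C x - K x)) := by linear_combination (norm := abel_nf) heq
    rw [this, norm_neg]
  have h2 : ‖t • (C x - K x)‖ ≤ c / 2 * ‖x‖ := by
    rw [norm_smul, Real.norm_eq_abs, abs_of_nonneg ht.1]
    calc t * ‖C x - K x‖ ≤ 1 * ‖C x - K x‖ := by
          apply mul_le_mul_of_nonneg_right ht.2 (norm_nonneg _)
      _ = ‖C x - K x‖ := one_mul _
      _ = ‖K x - C x‖ := by rw [← norm_neg]; congr 1; abel
      _ ≤ c / 2 * ‖x‖ := hxb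
  have h3 := hcb x
  nlinarith [hx]
end

section
/- (Growth condition (A3) for the polynomial class of Section 5.2(a).) Let n, m ≥ 1, V = ℝⁿ with the max norm |x| := max_s |x_s|, let r ≥ 5 and t be odd integers with 3 ≤ t < r, and let q₀ > 0. For s = 1, …, n let Q_s : V × V^{m−1} → ℝ be continuous with Q_s(x, 𝐲) ≥ q₀ for all (x, 𝐲), and let q_s : V × V^{m−1} → ℝ be continuous and positively homogeneous of degree t (q_s(c·u) = cᵗ·q_s(u) for all c > 0 and all u ∈ V × V^{m−1}). Let A₀, …, A_{m−1} be real n×n matrices and define f : V × V^{m−1} → V componentwise by f_s(x, 𝐲) := (A₀x + Σ_{j=1}^{m−1} A_j yʲ)_s + x_sʳ·Q_s(x, 𝐲) + q_s(x, 𝐲). Then there exists R > 0 such that for all (x, y¹, …, y^{m−1}) ∈ Vᵐ with |x| > R and |yʲ| ≤ |x| for j = 1, …, m−1, one has x • f(x, y¹, …, y^{m−1}) > 0, where • is the Euclidean inner product. -/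
open Real Function Finset

/-- Growth condition (A3) for the polynomial class of
Section 5.2(a): with `V = ℝⁿ` carrying the max norm (the sup norm on
`Fin n → ℝ`), odd integers `r ≥ 5` and `3 ≤ t < r`, continuous `Q_s ≥ q₀ > 0`,
continuous `q_s` positively homogeneous of degree `t`, real matrices
`A₀, …, A_{m−1}`, and
`f_s(x, 𝐲) = (A₀x + Σ_j A_j yʲ)_s + x_sʳ·Q_s(x,𝐲) + q_s(x,𝐲)`,
there exists `R > 0` such that `|x| > R` and `|yʲ| ≤ |x|` for all `j` imply
`x • f(x, y¹, …, y^{m−1}) > 0` (Euclidean inner product). -/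
theorem stmt11 (n m : ℕ) (hn : 0 < n) (hm : 0 < m)
    (r t : ℕ) (hr5 : 5 ≤ r) (hrodd : Odd r) (ht3 : 3 ≤ t) (htr : t < r)
    (htodd : Odd t) (q0 : ℝ) (hq0 : 0 < q0)
    (Q q : Fin n → ((Fin n → ℝ) × (Fin (m - 1) → Fin n → ℝ)) → ℝ)
    (hQcont : ∀ s : Fin n, Continuous (Q s))
    (hQpos : ∀ (s : Fin n) (u : (Fin n → ℝ) × (Fin (m - 1) → Fin n → ℝ)),
      q0 ≤ Q s u)
    (hqcont : ∀ s : Fin n, Continuous (q s))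
    (hqhom : ∀ (s : Fin n) (c : ℝ), 0 < c →
      ∀ u : (Fin n → ℝ) × (Fin (m - 1) → Fin n → ℝ),
        q s (c • u) = c ^ t * q s u)
    (A0 : Matrix (Fin n) (Fin n) ℝ) (A : Fin (m - 1) → Matrix (Fin n) (Fin n) ℝ)
    (f : (Fin n → ℝ) → (Fin (m - 1) → Fin n → ℝ) → (Fin n → ℝ))
    (hf : ∀ (x : Fin n → ℝ) (y : Fin (m - 1) → Fin n → ℝ) (s : Fin n),
      f x y s = (A0.mulVec x + ∑ j : Fin (m - 1), (A j).mulVec (y j)) s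
        + (x s) ^ r * Q s (x, y) + q s (x, y)) :
    ∃ R > (0 : ℝ), ∀ (x : Fin n → ℝ) (y : Fin (m - 1) → Fin n → ℝ),
      R < ‖x‖ → (∀ j : Fin (m - 1), ‖y j‖ ≤ ‖x‖) →
      0 < ∑ i : Fin n, x i * f x y i := by
  classical
  have hnne : Nonempty (Fin n) := ⟨⟨0, hn⟩⟩
  -- bound for matrix-vector products
  have hmv : ∀ (B : Matrix (Fin n) (Fin n) ℝ) (v : Fin n → ℝ) (i : Fin n),
      |B.mulVec v i| ≤ (∑ k, |B i k|) * ‖v‖ := by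
    intro B v i
    calc |B.mulVec v i| = |∑ k, B i k * v k| := by
            simp [Matrix.mulVec, dotProduct]
      _ ≤ ∑ k, |B i k * v k| := Finset.abs_sum_le_sum_abs _ _
      _ ≤ ∑ k, |B i k| * ‖v‖ := by
            refine Finset.sum_le_sum fun k _ => ?_
            rw [abs_mul]
            exact mul_le_mul_of_nonneg_left
              (by simpa [Real.norm_eq_abs] using norm_le_pi_norm v k)
              (abs_nonneg _)
      _ = (∑ k, |B i k|) * ‖v‖ := (Finset.sum_mul _ _ _).symm
  -- bound for ∑ |q s| on the closed unit ball
  obtain ⟨M, hM⟩ : ∃ M, ∀ u ∈ Metric.closedBall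
      (0 : (Fin n → ℝ) × (Fin (m - 1) → Fin n → ℝ)) 1, (∑ s, |q s u|) ≤ M := by
    have hcomp : IsCompact (Metric.closedBall
        (0 : (Fin n → ℝ) × (Fin (m - 1) → Fin n → ℝ)) 1) :=
      isCompact_closedBall _ _
    have hc : Continuous fun u : (Fin n → ℝ) × (Fin (m - 1) → Fin n → ℝ) =>
        ∑ s, |q s u| :=
      continuous_finset_sum _ fun s _ => (hqcont s).abs
    obtain ⟨u₀, _, hu₀⟩ := hcomp.exists_isMaxOn ⟨0, by simp⟩ hc.continuousOn
    exact ⟨_, fun u hu => isMaxOn_iff.mp hu₀ u hu⟩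
  have hM0 : 0 ≤ M := le_trans (by positivity) (hM 0 (by simp))
  set C : ℝ := ∑ i : Fin n, ((∑ k, |A0 i k|) + ∑ j, ∑ k, |A j i k|) with hCdef
  have hC0 : 0 ≤ C := by positivity
  refine ⟨max 1 ((C + M) / q0), lt_of_lt_of_le one_pos (le_max_left _ _), ?_⟩
  intro x y hR hy
  set c : ℝ := ‖x‖ with hcdef
  have hc1 : 1 < c := lt_of_le_of_lt (le_max_left _ _) hR
  have hc0 : 0 < c := lt_trans one_pos hc1
  have hxabs : ∀ i, |x i| ≤ c := fun i => by
    simpa [Real.norm_eq_abs] using norm_le_pi_norm x i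
  -- the scaled point on the unit ball
  set u : (Fin n → ℝ) × (Fin (m - 1) → Fin n → ℝ) := c⁻¹ • (x, y) with hudef
  have hcu : c • u = (x, y) := smul_inv_smul₀ hc0.ne' _
  have hub : u ∈ Metric.closedBall
      (0 : (Fin n → ℝ) × (Fin (m - 1) → Fin n → ℝ)) 1 := by
    rw [Metric.mem_closedBall, dist_zero_right, hudef, Prod.norm_def]
    apply max_le
    · have h1 : ‖(c⁻¹ • (x, y) : (Fin n → ℝ) × (Fin (m - 1) → Fin n → ℝ)).1‖
          = c⁻¹ * c := by
        rw [Prod.smul_fst, norm_smul, norm_inv, Real.norm_eq_abs,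
          abs_of_pos hc0, ← hcdef]
      rw [h1, inv_mul_cancel₀ hc0.ne']
    · rw [Prod.smul_snd]
      apply (pi_norm_le_iff_of_nonneg zero_le_one).mpr
      intro j
      rw [Pi.smul_apply, norm_smul, norm_inv, Real.norm_eq_abs, abs_of_pos hc0,
        inv_mul_le_iff₀ hc0, mul_one]
      exact hy j
  have hq_eq : ∀ s, q s (x, y) = c ^ t * q s u := fun s => by
    rw [← hqhom s c hc0 u, hcu]
  -- rewrite the sum
  have hsum : (∑ i, x i * f x y i) =
      (∑ i, x i * ((A0.mulVec x) i + ∑ j, ((A j).mulVec (y j)) i))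
      + (∑ i, x i ^ (r + 1) * Q i (x, y))
      + (∑ i, x i * q i (x, y)) := by
    rw [← Finset.sum_add_distrib, ← Finset.sum_add_distrib]
    refine Finset.sum_congr rfl fun i _ => ?_
    rw [hf x y i]
    simp only [Pi.add_apply, Finset.sum_apply]
    ring
  -- bound the linear part
  have hLin : |∑ i, x i * ((A0.mulVec x) i + ∑ j, ((A j).mulVec (y j)) i)|
      ≤ C * c ^ 2 := by
    calc |∑ i, x i * ((A0.mulVec x) i + ∑ j, ((A j).mulVec (y j)) i)|
        ≤ ∑ i, |x i * ((A0.mulVec x) i + ∑ j, ((A j).mulVec (y j)) i)| :=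
          Finset.abs_sum_le_sum_abs _ _
      _ ≤ ∑ i : Fin n, ((∑ k, |A0 i k|) + ∑ j, ∑ k, |A j i k|) * c ^ 2 := by
          refine Finset.sum_le_sum fun i _ => ?_
          rw [abs_mul]
          have hli : |(A0.mulVec x) i + ∑ j, ((A j).mulVec (y j)) i|
              ≤ ((∑ k, |A0 i k|) + ∑ j, ∑ k, |A j i k|) * c := by
            calc |(A0.mulVec x) i + ∑ j, ((A j).mulVec (y j)) i|
                ≤ |(A0.mulVec x) i| + |∑ j, ((A j).mulVec (y j)) i| :=
                  abs_add_le _ _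
              _ ≤ (∑ k, |A0 i k|) * c + ∑ j, (∑ k, |A j i k|) * c := by
                  refine add_le_add (hmv A0 x i) ?_
                  calc |∑ j, ((A j).mulVec (y j)) i|
                      ≤ ∑ j, |((A j).mulVec (y j)) i| :=
                        Finset.abs_sum_le_sum_abs _ _
                    _ ≤ ∑ j, (∑ k, |A j i k|) * c := by
                        refine Finset.sum_le_sum fun j _ => ?_
                        refine le_trans (hmv (A j) (y j) i) ?_
                        exact mul_le_mul_of_nonneg_left (hy j)
                          (by positivity)
              _ = ((∑ k, |A0 i k|) + ∑ j, ∑ k, |A j i k|) * c := by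
                  rw [add_mul, Finset.sum_mul, Finset.sum_mul]
          calc |x i| * |(A0.mulVec x) i + ∑ j, ((A j).mulVec (y j)) i|
              ≤ c * (((∑ k, |A0 i k|) + ∑ j, ∑ k, |A j i k|) * c) :=
                mul_le_mul (hxabs i) hli (abs_nonneg _) hc0.le
            _ = ((∑ k, |A0 i k|) + ∑ j, ∑ k, |A j i k|) * c ^ 2 := by ring
      _ = C * c ^ 2 := by rw [hCdef, Finset.sum_mul]
  -- bound the dominant part from below
  have hevenr : Even (r + 1) := hrodd.add_one
  have hQsum : q0 * c ^ (r + 1) ≤ ∑ i, x i ^ (r + 1) * Q i (x, y) := by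
    obtain ⟨i₀, hi₀⟩ := Finite.exists_max fun i : Fin n => |x i|
    have hcx : c ≤ |x i₀| := by
      rw [hcdef]
      exact (pi_norm_le_iff_of_nonneg (abs_nonneg _)).mpr fun j => by
        simpa [Real.norm_eq_abs] using hi₀ j
    have hterm_nonneg : ∀ i ∈ Finset.univ, 0 ≤ x i ^ (r + 1) * Q i (x, y) := by
      intro i _
      exact mul_nonneg (hevenr.pow_nonneg _) (le_trans hq0.le (hQpos i _))
    calc q0 * c ^ (r + 1) ≤ q0 * |x i₀| ^ (r + 1) := by
          exact mul_le_mul_of_nonneg_left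
            (pow_le_pow_left₀ hc0.le hcx _) hq0.le
      _ = q0 * x i₀ ^ (r + 1) := by rw [hevenr.pow_abs]
      _ ≤ x i₀ ^ (r + 1) * Q i₀ (x, y) := by
          rw [mul_comm]
          exact mul_le_mul_of_nonneg_left (hQpos i₀ _) (hevenr.pow_nonneg _)
      _ ≤ ∑ i, x i ^ (r + 1) * Q i (x, y) :=
          Finset.single_le_sum hterm_nonneg (Finset.mem_univ i₀)
  -- bound the homogeneous part
  have hqsum : |∑ i, x i * q i (x, y)| ≤ M * c ^ (t + 1) := by
    calc |∑ i, x i * q i (x, y)| ≤ ∑ i, |x i * q i (x, y)| :=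
          Finset.abs_sum_le_sum_abs _ _
      _ ≤ ∑ i, c * (c ^ t * |q i u|) := by
          refine Finset.sum_le_sum fun i _ => ?_
          rw [abs_mul, hq_eq i, abs_mul, abs_of_pos (pow_pos hc0 t)]
          exact mul_le_mul (hxabs i) le_rfl (by positivity) hc0.le
      _ = c ^ (t + 1) * ∑ i, |q i u| := by
          rw [← Finset.mul_sum, ← Finset.mul_sum]; ring
      _ ≤ c ^ (t + 1) * M :=
          mul_le_mul_of_nonneg_left (hM u hub) (by positivity)
      _ = M * c ^ (t + 1) := mul_comm _ _
  -- combine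
  have h1 : (C + M) / q0 < c := lt_of_le_of_lt (le_max_right _ _) hR
  have hkey : C + M < q0 * c := by
    rw [div_lt_iff₀ hq0] at h1
    linarith
  have hp2 : c ^ 2 ≤ c ^ r := pow_le_pow_right₀ hc1.le (by omega)
  have hpt : c ^ (t + 1) ≤ c ^ r := pow_le_pow_right₀ hc1.le (by omega)
  have hbig : C * c ^ 2 + M * c ^ (t + 1) < q0 * c ^ (r + 1) := by
    have h2 : C * c ^ 2 + M * c ^ (t + 1) ≤ (C + M) * c ^ r := by nlinarith
    have h3 : (C + M) * c ^ r < (q0 * c) * c ^ r :=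
      mul_lt_mul_of_pos_right hkey (pow_pos hc0 r)
    have h4 : (q0 * c) * c ^ r = q0 * c ^ (r + 1) := by ring
    linarith
  rw [hsum]
  obtain ⟨hL1, hL2⟩ := abs_le.mp hLin
  obtain ⟨hq1, hq2⟩ := abs_le.mp hqsum
  linarith
end
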